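/- Let f : R → R' be a morphism of commutative rings such that for every r' ∈ R' there exist r ∈ R and an invertible u ∈ R' with r' = u·f(r). Then an R'-module C is contraadjusted as an R'-module if and only if C is contraadjusted as an R-module (via restriction of scalars). -/

import Mathlib

open CategoryTheory


noncomputable section Telescope

variable (A : Type) [CommRing A] (t : A)

/-- e_n ↦ e_n - t e_{n+1} -/
noncomputable def dLin : (ℕ →₀ A) →ₗ[A] (ℕ →₀ A) :=
  Finsupp.lsum A fun n => LinearMap.toSpanSingleton A _
    (Finsupp.single n 1 - t • Finsupp.single (n+1) 1)

lemma dLin_single (n : ℕ) (a : A) :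
    dLin A t (Finsupp.single n a) = a • (Finsupp.single n (1:A) - t • Finsupp.single (n+1) 1) := by
  simp [dLin]

def pow' (n : ℕ) : Submonoid.powers t := ⟨t^n, n, rfl⟩

noncomputable def piLin : (ℕ →₀ A) →ₗ[A] Localization.Away t :=
  Finsupp.lsum A fun n => LinearMap.toSpanSingleton A _
    (Localization.mk 1 (pow' A t n))

lemma piLin_single (n : ℕ) (a : A) :
    piLin A t (Finsupp.single n a) = a • Localization.mk 1 (pow' A t n) := by
  simp [piLin]

lemma piLin_surjective : Function.Surjective (piLin A t) := by
  intro x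
  induction x using Localization.induction_on with
  | H p =>
    obtain ⟨r, s⟩ := p
    obtain ⟨n, hn⟩ := s.2
    refine ⟨Finsupp.single n r, ?_⟩
    rw [piLin_single, Localization.smul_mk]
    rw [Localization.mk_eq_mk_iff, Localization.r_iff_exists]
    exact ⟨1, by simp [pow', smul_eq_mul, hn, mul_comm]⟩

lemma mk_one_succ : Localization.mk (1:A) (pow' A t n) = t • Localization.mk 1 (pow' A t (n+1)) := by
  rw [Localization.smul_mk, Localization.mk_eq_mk_iff, Localization.r_iff_exists]
  exact ⟨1, by simp [pow', smul_eq_mul, pow_succ, mul_comm]⟩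

lemma piLin_dLin : ∀ x, piLin A t (dLin A t x) = 0 := by
  intro x
  induction x using Finsupp.induction_linear with
  | zero => simp
  | add a b ha hb => simp [ha, hb]
  | single n a =>
    rw [dLin_single, map_smul, map_sub, map_smul, piLin_single, piLin_single]
    rw [smul_smul, one_smul, mk_one_succ A t]
    simp

lemma dLin_apply_zero (x : ℕ →₀ A) : (dLin A t x) 0 = x 0 := by
  induction x using Finsupp.induction_linear with
  | zero => simp
  | add a b ha hb => simp [ha, hb]
  | single n a =>
    rw [dLin_single]
    simp [Finsupp.single_apply, Finsupp.smul_apply]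

lemma dLin_apply_succ (x : ℕ →₀ A) (m : ℕ) :
    (dLin A t x) (m+1) = x (m+1) - t * x m := by
  induction x using Finsupp.induction_linear with
  | zero => simp
  | add a b ha hb => simp [ha, hb]; ring
  | single n a =>
    rw [dLin_single]
    simp only [Finsupp.single_apply, Finsupp.smul_apply, Finsupp.sub_apply, smul_eq_mul]
    split_ifs <;> first | ring1 | (exfalso; omega)

lemma dLin_injective : Function.Injective (dLin A t) := by
  rw [injective_iff_map_eq_zero]
  intro x hx
  ext m
  induction m with
  | zero =>
    have := dLin_apply_zero A t x
    rw [hx] at this; simpa using this.symm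
  | succ m ih =>
    have := dLin_apply_succ A t x m
    rw [hx] at this
    simp only [Finsupp.coe_zero, Pi.zero_apply] at this ih ⊢
    have := this.symm
    rw [ih, mul_zero, sub_zero] at this
    exact this

end Telescope

section Exactness

variable (A : Type) [CommRing A] (t : A)

/-- partial weighted sums: b x n = ∑_{k ≤ n} t^(n-k) x k -/
def bSeq (x : ℕ →₀ A) : ℕ → A
  | 0 => x 0
  | (n+1) => t * bSeq x n + x (n+1)

lemma mk_bSeq (x : ℕ →₀ A) (N : ℕ) :
    Localization.mk (bSeq A t x N) (pow' A t N)
      = ∑ k ∈ Finset.range (N+1), x k • Localization.mk 1 (pow' A t k) := by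
  induction N with
  | zero =>
    simp [bSeq, Localization.smul_mk]
  | succ N ih =>
    rw [Finset.sum_range_succ, ← ih, bSeq, Localization.smul_mk, smul_eq_mul, mul_one]
    have h1 : Localization.mk (t * bSeq A t x N) (pow' A t (N+1))
        = Localization.mk (bSeq A t x N) (pow' A t N) := by
      rw [Localization.mk_eq_mk_iff, Localization.r_iff_exists]
      exact ⟨1, by simp [pow', pow_succ]; ring⟩
    rw [← h1, Localization.add_mk_self]

lemma piLin_eq_mk (x : ℕ →₀ A) (N : ℕ) (hN : ∀ k, N < k → x k = 0) :
    piLin A t x = Localization.mk (bSeq A t x N) (pow' A t N) := by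
  rw [mk_bSeq]
  have hsupp : x.support ⊆ Finset.range (N+1) := by
    intro k hk
    rw [Finset.mem_range]
    by_contra h
    exact (Finsupp.mem_support_iff.mp hk) (hN k (by omega))
  have : piLin A t x = x.sum fun n a => a • Localization.mk 1 (pow' A t n) := by
    simp [piLin, Finsupp.lsum_apply, Finsupp.sum]
  rw [this, Finsupp.sum_of_support_subset x hsupp _ (by intro i _; simp)]

lemma bSeq_shift (x : ℕ →₀ A) (N : ℕ) (hN : ∀ k, N < k → x k = 0) (i : ℕ) :
    bSeq A t x (N + i) = t ^ i * bSeq A t x N := by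
  induction i with
  | zero => simp
  | succ i ih =>
    show t * bSeq A t x (N+i) + x (N+i+1) = _
    rw [ih, hN _ (by omega)]
    ring

lemma exists_preimage (x : ℕ →₀ A) (hx : piLin A t x = 0) :
    ∃ y : ℕ →₀ A, dLin A t y = x := by
  obtain ⟨N, hN⟩ : ∃ N, ∀ k, N < k → x k = 0 := by
    rcases x.support.bddAbove with ⟨N, hNb⟩
    exact ⟨N, fun k hk => by
      by_contra h
      exact absurd (hNb (Finsupp.mem_support_iff.mpr h)) (by omega)⟩
  rw [piLin_eq_mk A t x N hN] at hx
  have h0 : Localization.mk (0:A) (1 : Submonoid.powers t) = 0 := Localization.mk_zero _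
  rw [← h0, Localization.mk_eq_mk_iff, Localization.r_iff_exists] at hx
  obtain ⟨c, hc⟩ := hx
  obtain ⟨m, hm⟩ := c.2
  have hbM : bSeq A t x (N + m) = 0 := by
    rw [bSeq_shift A t x N hN m, show t ^ m = (c:A) from hm]
    simpa using hc
  have hb0 : ∀ j, N + m ≤ j → bSeq A t x j = 0 := by
    intro j hj
    obtain ⟨i, rfl⟩ : ∃ i, j = (N + m) + i := ⟨j - N - m, by omega⟩
    rw [bSeq_shift A t x (N+m) (fun k hk => hN k (by omega)) i, hbM, mul_zero]
  refine ⟨Finsupp.onFinset (Finset.range (N+m+1)) (fun n => bSeq A t x n) ?_, ?_⟩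
  · intro n hn
    rw [Finset.mem_range]
    by_contra h
    exact hn (hb0 n (by omega))
  · ext k
    match k with
    | 0 => rw [dLin_apply_zero]; rfl
    | (k+1) =>
      rw [dLin_apply_succ]
      show bSeq A t x (k+1) - t * bSeq A t x k = x (k+1)
      rw [bSeq]
      ring

end Exactness


noncomputable section Res

open CategoryTheory CategoryTheory.Limits

variable (A : Type) [CommRing A] (t : A)

def Fmod : ModuleCat A := ModuleCat.of A (ℕ →₀ A)

instance : Projective (Fmod A) :=
  ModuleCat.projective_of_free (M := Fmod A) Finsupp.basisSingleOne

def Zmod : ModuleCat A := ModuleCat.of A PUnit.{1}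

instance : Subsingleton (Zmod A) := by unfold Zmod; infer_instance

instance : Projective (Zmod A) :=
  (IsProjective.iff_projective (R := A) (P := PUnit)).mp inferInstance

def teleX : ℕ → ModuleCat A
  | 0 => Fmod A
  | 1 => Fmod A
  | (_+2) => Zmod A

def teled : ∀ n, teleX A (n+1) ⟶ teleX A n
  | 0 => ModuleCat.ofHom (dLin A t)
  | (_+1) => 0

def teleComplex : ChainComplex (ModuleCat A) ℕ :=
  ChainComplex.of (teleX A) (teled A t) (fun n => by
    show (0 : teleX A (n+2) ⟶ teleX A (n+1)) ≫ _ = 0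
    exact zero_comp)


abbrev Lmod : ModuleCat A := ModuleCat.of A (Localization.Away t)

def pimor : Fmod A ⟶ Lmod A t := ModuleCat.ofHom (piLin A t)

lemma teleComplex_exactAt_succ (n : ℕ) : (teleComplex A t).ExactAt (n+1) := by
  rw [HomologicalComplex.exactAt_iff' _ (n+1+1) (n+1) n (by simp) (by simp)]
  match n with
  | 0 =>
    rw [ShortComplex.moduleCat_exact_iff]
    intro x hx
    simp only [HomologicalComplex.sc', HomologicalComplex.shortComplexFunctor'_obj_g,
      HomologicalComplex.shortComplexFunctor'_obj_f, teleComplex, ChainComplex.of_d,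
      teled] at hx ⊢
    have hx0 : x = 0 := dLin_injective A t (by exact hx.trans (map_zero (dLin A t)).symm)
    exact ⟨0, by rw [hx0]; exact map_zero _⟩
  | (n+1) =>
    apply ShortComplex.exact_of_isZero_X₂
    have : Subsingleton ((HomologicalComplex.sc' (teleComplex A t) (n+1+1+1) (n+1+1) (n+1)).X₂) := by
      show Subsingleton (teleX A (n+1+1))
      rw [teleX]
      infer_instance
    exact ModuleCat.isZero_of_subsingleton _

def teleRes : ProjectiveResolution (Lmod A t) where
  complex := teleComplex A t
  projective n := by
    rcases n with _|_|n
    · exact (inferInstance : Projective (Fmod A))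
    · exact (inferInstance : Projective (Fmod A))
    · exact (inferInstance : Projective (Zmod A))
  π := (ChainComplex.toSingle₀Equiv _ _).symm ⟨pimor A t, by
    simp only [teleComplex, ChainComplex.of_d]
    ext x
    exact piLin_dLin A t x⟩
  quasiIso := ⟨fun n => by
    cases n with
    | zero =>
      rw [ChainComplex.quasiIsoAt₀_iff, ShortComplex.quasiIso_iff_of_zeros']
      · constructor
        · rw [ShortComplex.moduleCat_exact_iff]
          intro x hx
          dsimp at x hx ⊢
          change piLin A t x = 0 at hx
          simp only [teleComplex, ChainComplex.of_d, teled]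
          exact exists_preimage A t x hx
        · have h : Epi (pimor A t) := (ModuleCat.epi_iff_surjective _).2 (piLin_surjective A t)
          change Epi (pimor A t)
          exact h
      all_goals rfl
    | succ n =>
      rw [quasiIsoAt_iff_exactAt']
      · exact teleComplex_exactAt_succ A t n
      · apply ChainComplex.exactAt_succ_single_obj⟩


lemma teleComplex_d_1_0 : (teleComplex A t).d 1 0 = (ModuleCat.ofHom (dLin A t) : Fmod A ⟶ Fmod A) := by
  simp only [teleComplex, ChainComplex.of_d]
  rfl

open Limits in
lemma isZero_iff_subsingleton (M : ModuleCat A) : IsZero M ↔ Subsingleton M := by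
  constructor
  · intro h
    constructor
    intro a b
    have h1 : (𝟙 M : M ⟶ M) = 0 := h.eq_of_tgt _ _
    calc a = (𝟙 M : M ⟶ M) a := rfl
      _ = (0 : M ⟶ M) a := by rw [h1]
      _ = (𝟙 M : M ⟶ M) b := by rw [h1]; rfl
      _ = b := rfl
  · intro h
    exact ModuleCat.isZero_of_subsingleton M

section Hlgy

variable (C : Type) [AddCommGroup C] [Module A C]

instance : Subsingleton ((teleComplex A t).X 2 ⟶ ModuleCat.of A C) := by
  show Subsingleton (Zmod A ⟶ ModuleCat.of A C)
  exact ⟨fun a b => ModuleCat.hom_ext (Subsingleton.elim _ _)⟩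

lemma ext_subsingleton_iff_surj :
    Subsingleton (((Ext A (ModuleCat A) 1).obj
        (Opposite.op (ModuleCat.of A (Localization.Away t)))).obj (ModuleCat.of A C)) ↔
    Function.Surjective (fun φ : (Fmod A ⟶ ModuleCat.of A C) =>
      ((ModuleCat.ofHom (dLin A t) : Fmod A ⟶ Fmod A) ≫ φ : Fmod A ⟶ ModuleCat.of A C)) := by
  have e := (teleRes A t).isoExt (R := A) 1 (ModuleCat.of A C)
  rw [Equiv.subsingleton_congr e.toLinearEquiv.toEquiv]
  rw [← isZero_iff_subsingleton, ← HomologicalComplex.exactAt_iff_isZero_homology]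
  rw [HomologicalComplex.exactAt_iff' _ 0 1 2 (by simp) (by simp),
    ShortComplex.moduleCat_exact_iff]
  constructor
  · intro h ψ
    obtain ⟨φ, hφ⟩ := h ψ (Subsingleton.elim (α := (teleComplex A t).X 2 ⟶ ModuleCat.of A C) _ _)
    refine ⟨φ, ?_⟩
    rw [← hφ]
    show ((teleComplex A t).linearYonedaObj A (ModuleCat.of A C)).d 0 1 φ = _
    rw [ChainComplex.linearYonedaObj_d, teleComplex_d_1_0]
    rfl
  · intro h ψ _
    obtain ⟨φ, hφ⟩ := h ψ
    refine ⟨φ, ?_⟩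
    show ((teleComplex A t).linearYonedaObj A (ModuleCat.of A C)).d 0 1 φ = _
    rw [ChainComplex.linearYonedaObj_d, teleComplex_d_1_0]
    exact hφ

end Hlgy



section Seq

variable (C : Type) [AddCommGroup C] [Module A C]

lemma surj_iff_seq :
    Function.Surjective (fun φ : (Fmod A ⟶ ModuleCat.of A C) =>
      ((ModuleCat.ofHom (dLin A t) : Fmod A ⟶ Fmod A) ≫ φ : Fmod A ⟶ ModuleCat.of A C)) ↔
    (∀ b : ℕ → C, ∃ c : ℕ → C, ∀ n, c n - t • c (n+1) = b n) := by
  constructor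
  · intro h b
    obtain ⟨φ, hφ⟩ := h (ModuleCat.ofHom (Finsupp.lsum A fun n => LinearMap.toSpanSingleton A C (b n)))
    refine ⟨fun n => φ (Finsupp.single n 1), fun n => ?_⟩
    have h1 := LinearMap.congr_fun (congrArg ModuleCat.Hom.hom hφ) (Finsupp.single n 1)
    have h2 : φ (dLin A t (Finsupp.single n 1))
        = φ (Finsupp.single n 1) - t • φ (Finsupp.single (n+1) 1) := by
      rw [dLin_single, one_smul]
      exact (map_sub φ.hom _ _).trans (congrArg _ (map_smul φ.hom _ _))
    have h1' : φ (dLin A t (Finsupp.single n 1))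
        = ((Finsupp.lsum A) fun n => LinearMap.toSpanSingleton A C (b n)) (Finsupp.single n 1) :=
      h1
    rw [h2] at h1'
    rw [h1']
    simp
  · intro h ψ
    obtain ⟨c, hc⟩ := h (fun n => ψ (Finsupp.single n 1))
    refine ⟨ModuleCat.ofHom (Finsupp.lsum A fun n => LinearMap.toSpanSingleton A C (c n)), ?_⟩
    refine ModuleCat.hom_ext (Finsupp.lhom_ext fun n a => ?_)
    show (Finsupp.lsum A fun n => LinearMap.toSpanSingleton A C (c n))
        (dLin A t (Finsupp.single n a)) = ψ (Finsupp.single n a)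
    rw [dLin_single, map_smul, map_sub, map_smul]
    simp only [Finsupp.lsum_single, LinearMap.toSpanSingleton_apply, one_smul]
    rw [hc n]
    rw [show Finsupp.single n a = a • Finsupp.single n (1:A) by simp]
    exact (map_smul ψ.hom _ _).symm

lemma ext_subsingleton_iff_seq :
    Subsingleton (((Ext A (ModuleCat A) 1).obj
        (Opposite.op (ModuleCat.of A (Localization.Away t)))).obj (ModuleCat.of A C)) ↔
    (∀ b : ℕ → C, ∃ c : ℕ → C, ∀ n, c n - t • c (n+1) = b n) :=
  (ext_subsingleton_iff_surj A t C).trans (surj_iff_seq A t C)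

end Seq

end Res


/-- Let `f : R → R'` be a morphism of commutative rings such that every
`r' ∈ R'` can be written as `r' = u · f(r)` with `r ∈ R` and `u ∈ R'` invertible.  Then an
`R'`-module `C` is contraadjusted as an `R'`-module if and only if it is contraadjusted as
an `R`-module (via restriction of scalars along `f`). -/
theorem contraadjusted_iff_contraadjusted_restrictScalars
    (R R' : Type) [CommRing R] [CommRing R'] (f : R →+* R')
    (hf : ∀ r' : R', ∃ (r : R) (u : R'ˣ), r' = (u : R') * f r)
    (C : Type) [AddCommGroup C] [Module R' C] :
    (∀ t' : R', Subsingleton (((Ext R' (ModuleCat R') 1).obj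
        (Opposite.op (ModuleCat.of R' (Localization.Away t')))).obj (ModuleCat.of R' C))) ↔
    (∀ t : R,
      letI : Module R C := Module.compHom C f
      Subsingleton (((Ext R (ModuleCat R) 1).obj
        (Opposite.op (ModuleCat.of R (Localization.Away t)))).obj (ModuleCat.of R C))) := by
  letI : Module R C := Module.compHom C f
  constructor
  · intro H t
    rw [ext_subsingleton_iff_seq R t C]
    have h := (ext_subsingleton_iff_seq R' (f t) C).mp (H (f t))
    intro b
    obtain ⟨c, hc⟩ := h b
    exact ⟨c, fun n => hc n⟩
  · intro H t'
    rw [ext_subsingleton_iff_seq R' t' C]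
    obtain ⟨t, u, rfl⟩ := hf t'
    have h := (ext_subsingleton_iff_seq R t C).mp (H t)
    intro b
    obtain ⟨d, hd⟩ := h (fun n => ((u:R')^n) • b n)
    refine ⟨fun n => (((u⁻¹ : R'ˣ) : R')^n) • d n, fun n => ?_⟩
    have hdn : d n - f t • d (n+1) = ((u:R')^n) • b n := hd n
    have hu : (u:R') * (((u⁻¹ : R'ˣ) : R')^(n+1)) = ((u⁻¹ : R'ˣ) : R')^n := by
      rw [← Units.val_pow_eq_pow_val, ← Units.val_pow_eq_pow_val, ← Units.val_mul]
      congr 1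
      group
    show (((u⁻¹ : R'ˣ) : R')^n) • d n
        - ((u:R') * f t) • ((((u⁻¹ : R'ˣ) : R')^(n+1)) • d (n+1)) = b n
    rw [smul_smul,
      show ((u:R') * f t) * (((u⁻¹ : R'ˣ) : R')^(n+1)) = (((u⁻¹ : R'ˣ) : R')^n) * f t from by
        rw [mul_comm (u:R') (f t), mul_assoc, hu, mul_comm],
      mul_smul, ← smul_sub, hdn, smul_smul, ← mul_pow, Units.inv_mul, one_pow, one_smul]
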